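/- If S is the standard middle-thirds Cantor set in [0,1], then the difference set S − S = {a − b : a, b ∈ S} equals the interval [−1, 1]. -/
import Mathlib

private lemma preCantorSet_subset_unitInterval' : ∀ n, preCantorSet n ⊆ Set.Icc 0 1 := by
  intro n
  induction n with
  | zero => exact subset_rfl
  | succ n ih =>
    rintro x (⟨y, hy, rfl⟩ | ⟨y, hy, rfl⟩) <;>
      obtain ⟨h0, h1⟩ := ih hy <;> constructor <;> simp <;> linarith

private lemma preCantorSet_succ_subset' : ∀ n, preCantorSet (n + 1) ⊆ preCantorSet n := by
  intro n
  induction n with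
  | zero =>
    intro x hx
    exact preCantorSet_subset_unitInterval' 1 hx
  | succ n ih =>
    rintro x (⟨y, hy, rfl⟩ | ⟨y, hy, rfl⟩)
    · exact Or.inl ⟨y, ih hy, rfl⟩
    · exact Or.inr ⟨y, ih hy, rfl⟩

private lemma key_diff : ∀ n, ∀ d : ℝ, d ∈ Set.Icc (-1 : ℝ) 1 →
    ∃ a ∈ preCantorSet n, ∃ b ∈ preCantorSet n, a - b = d := by
  intro n
  induction n with
  | zero =>
    intro d ⟨h0, h1⟩
    rcases le_total d 0 with h | h
    · exact ⟨0, ⟨le_refl 0, zero_le_one⟩, -d, ⟨by linarith, by linarith⟩, by ring⟩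
    · exact ⟨d, ⟨by linarith, by linarith⟩, 0, ⟨le_refl 0, zero_le_one⟩, by ring⟩
  | succ n ih =>
    intro d ⟨h0, h1⟩
    rcases le_total d (-(1/3) : ℝ) with h | h
    · obtain ⟨a, ha, b, hb, hab⟩ := ih (3 * d + 2) ⟨by linarith, by linarith⟩
      exact ⟨a / 3, Or.inl ⟨a, ha, rfl⟩, (2 + b) / 3, Or.inr ⟨b, hb, rfl⟩, by linarith⟩
    rcases le_total d (1/3 : ℝ) with h' | h'
    · obtain ⟨a, ha, b, hb, hab⟩ := ih (3 * d) ⟨by linarith, by linarith⟩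
      exact ⟨a / 3, Or.inl ⟨a, ha, rfl⟩, b / 3, Or.inl ⟨b, hb, rfl⟩, by linarith⟩
    · obtain ⟨a, ha, b, hb, hab⟩ := ih (3 * d - 2) ⟨by linarith, by linarith⟩
      exact ⟨(2 + a) / 3, Or.inr ⟨a, ha, rfl⟩, b / 3, Or.inl ⟨b, hb, rfl⟩, by linarith⟩

/-- The difference set `S − S = {a − b : a, b ∈ S}` of the standard middle-thirds
Cantor set `S ⊂ [0,1]` equals the interval `[−1, 1]`. -/
theorem cantorSet_sub_cantorSet_eq_Icc :
    {d : ℝ | ∃ a ∈ cantorSet, ∃ b ∈ cantorSet, d = a - b} = Set.Icc (-1 : ℝ) 1 := by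
  ext d
  constructor
  · rintro ⟨a, ha, b, hb, rfl⟩
    obtain ⟨ha0, ha1⟩ := cantorSet_subset_unitInterval ha
    obtain ⟨hb0, hb1⟩ := cantorSet_subset_unitInterval hb
    exact ⟨by linarith, by linarith⟩
  · intro hd
    set F : ℕ → Set (ℝ × ℝ) :=
      fun n => {p | p.1 ∈ preCantorSet n ∧ p.2 ∈ preCantorSet n ∧ p.1 - p.2 = d} with hF
    have hsub : ∀ n, F (n + 1) ⊆ F n := fun n p ⟨h1, h2, h3⟩ =>
      ⟨preCantorSet_succ_subset' n h1, preCantorSet_succ_subset' n h2, h3⟩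
    have hne : ∀ n, (F n).Nonempty := by
      intro n
      obtain ⟨a, ha, b, hb, hab⟩ := key_diff n d hd
      exact ⟨(a, b), ha, hb, hab⟩
    have hcl : ∀ n, IsClosed (F n) := by
      intro n
      have : F n = ((preCantorSet n ×ˢ preCantorSet n) ∩ {p : ℝ × ℝ | p.1 - p.2 = d}) := by
        ext p; simp [hF, Set.mem_prod, and_assoc]
      rw [this]
      exact (((isClosed_preCantorSet n).prod (isClosed_preCantorSet n))).inter
        (isClosed_eq (continuous_fst.sub continuous_snd) continuous_const)
    have hc0 : IsCompact (F 0) := by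
      apply (isCompact_Icc.prod isCompact_Icc : IsCompact ((Set.Icc (0:ℝ) 1) ×ˢ (Set.Icc (0:ℝ) 1))).of_isClosed_subset (hcl 0)
      rintro p ⟨h1, h2, _⟩
      exact ⟨h1, h2⟩
    obtain ⟨⟨a, b⟩, hab⟩ :=
      IsCompact.nonempty_iInter_of_sequence_nonempty_isCompact_isClosed F hsub hne hc0 hcl
    simp only [Set.mem_iInter, hF, Set.mem_setOf_eq] at hab
    exact ⟨a, Set.mem_iInter.mpr fun n => (hab n).1,
      b, Set.mem_iInter.mpr fun n => (hab n).2.1, ((hab 0).2.2).symm⟩
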